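/- Let v be a real number and w a real number with w ∈ [−1,1] and w ≠ 0. Set R = (v/w)/(1 + √(1 + (v/w)²)) (a real number with |R| < 1) and S = iw + √(1 − w²) (a complex number with |S| = 1). Then TS(v,w) = 2F₃(R) − F₃(RS) − F₃(R/S) − 4F_{1,2}(R,1) + 2F_{1,2}(R,S) + 2F_{1,2}(R,1/S) + i·arcsin(w)·( F₂(RS) − F₂(R/S) − 2F_{1,1}(R,S) + 2F_{1,1}(R,1/S) ), where the real number TS(v,w) is regarded as a complex number. -/

import Mathlib

open Real MeasureTheory intervalIntegral

/-- `TS(v,w) = ∫₀¹ arctan(vx) arcsin(wx) / x dx` -/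
noncomputable def TS (v w : ℝ) : ℝ :=
  ∫ x in (0:ℝ)..1, Real.arctan (v * x) * Real.arcsin (w * x) / x

/-- `F_j(x) = ∑_{n≥0} x^(2n+1)/(2n+1)^j` -/
noncomputable def Fc (j : ℕ) (x : ℂ) : ℂ :=
  ∑' n : ℕ, x ^ (2 * n + 1) / ((2 * n + 1 : ℕ) : ℂ) ^ j

/-- `F_{j,k}(x,y) = ∑_{n≥0} (x^(2n+1)/(2n+1)^j) ∑_{m=0}^n y^(2m+1)/(2m+1)^k` -/
noncomputable def Fcc (j k : ℕ) (x y : ℂ) : ℂ :=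
  ∑' n : ℕ, (x ^ (2 * n + 1) / ((2 * n + 1 : ℕ) : ℂ) ^ j) *
    ∑ m ∈ Finset.range (n + 1), y ^ (2 * m + 1) / ((2 * m + 1 : ℕ) : ℂ) ^ k

lemma sqrt_facts (u : ℝ) : |u| ≤ Real.sqrt (1 + u ^ 2) ∧ (1:ℝ) ≤ Real.sqrt (1 + u ^ 2) := by
  constructor
  · rw [← Real.sqrt_sq_eq_abs]
    exact Real.sqrt_le_sqrt (by nlinarith)
  · have := Real.sqrt_le_sqrt (show (1:ℝ) ≤ 1 + u ^ 2 by nlinarith)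
    rwa [Real.sqrt_one] at this

lemma absR_lt_one (u : ℝ) : |u / (1 + Real.sqrt (1 + u ^ 2))| < 1 := by
  obtain ⟨h1, h2⟩ := sqrt_facts u
  rw [abs_div, abs_of_pos (show (0:ℝ) < 1 + Real.sqrt (1 + u ^ 2) by linarith),
    div_lt_one (by linarith)]
  linarith

lemma R_key (u : ℝ) : (u / (1 + Real.sqrt (1 + u ^ 2))) * 2
    = u * (1 - (u / (1 + Real.sqrt (1 + u ^ 2))) ^ 2) := by
  obtain ⟨h1, h2⟩ := sqrt_facts u
  have hs : Real.sqrt (1 + u ^ 2) ^ 2 = 1 + u ^ 2 := Real.sq_sqrt (by nlinarith)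
  have hne : 1 + Real.sqrt (1 + u ^ 2) ≠ 0 := by linarith
  field_simp
  linear_combination (-u) * hs

open Complex in
lemma hasSum_log_ratio {z : ℂ} (hznorm : ‖z‖ < 1) :
    HasSum (fun n : ℕ => 2 * z ^ (2 * n + 1) / ((2 * n + 1 : ℕ) : ℂ))
      (Complex.log ((1 + z) / (1 - z))) := by
  have h1 : HasSum (fun n : ℕ => (-1) ^ n * (-z * I) ^ (2 * n + 1) / ((2 * n + 1 : ℕ) : ℂ))
      (Complex.arctan (-z * I)) := Complex.hasSum_arctan (by simpa using hznorm)
  have h2 := h1.mul_left (2 * I)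
  have key : (fun n : ℕ => 2 * I * ((-1) ^ n * (-z * I) ^ (2 * n + 1) / ((2 * n + 1 : ℕ) : ℂ)))
      = fun n : ℕ => 2 * z ^ (2 * n + 1) / ((2 * n + 1 : ℕ) : ℂ) := by
    funext n
    have e1 : ((-1 : ℂ)) ^ n * (-1) ^ n = 1 := by
      rw [← pow_add]; exact Even.neg_one_pow ⟨n, rfl⟩
    have e0 : ((-I : ℂ)) ^ (2 * n + 1) = (-1) ^ n * (-I) := by
      rw [pow_succ, pow_mul, show ((-I) ^ 2 : ℂ) = -1 by rw [neg_pow]; simp [Complex.I_sq]]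
    have e2 : (-z * I) ^ (2 * n + 1) = (-1) ^ n * (-I) * z ^ (2 * n + 1) := by
      rw [show -z * I = z * (-I) by ring, mul_pow, e0]; ring
    rw [e2, div_eq_mul_inv, div_eq_mul_inv]
    calc 2 * I * ((-1) ^ n * ((-1) ^ n * (-I) * z ^ (2 * n + 1)) * ((2 * n + 1 : ℕ) : ℂ)⁻¹)
        = ((-1 : ℂ)) ^ n * (-1) ^ n
            * ((2 * (-(I * I))) * z ^ (2 * n + 1) * ((2 * n + 1 : ℕ) : ℂ)⁻¹) := by ring
      _ = 2 * z ^ (2 * n + 1) * ((2 * n + 1 : ℕ) : ℂ)⁻¹ := by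
          rw [e1, Complex.I_mul_I]; ring
  rw [key] at h2
  have harct : 2 * I * Complex.arctan (-z * I) = Complex.log ((1 + z) / (1 - z)) := by
    rw [Complex.arctan]
    have e3 : 1 + -z * I * I = 1 + z := by rw [mul_assoc, Complex.I_mul_I]; ring
    have e4 : (1 : ℂ) - -z * I * I = 1 - z := by rw [mul_assoc, Complex.I_mul_I]; ring
    rw [e3, e4, show 2 * I * (-I / 2 * Complex.log ((1 + z) / (1 - z)))
      = -(I * I) * Complex.log ((1 + z) / (1 - z)) by ring, Complex.I_mul_I]
    ring
  rwa [harct] at h2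

open Complex in
lemma hasSum_arctan_sin {R : ℝ} (hR : |R| < 1) (t : ℝ) :
    HasSum (fun n : ℕ => 2 * R ^ (2 * n + 1) * Real.sin (((2 * n + 1 : ℕ) : ℝ) * t)
      / ((2 * n + 1 : ℕ) : ℝ))
      (Real.arctan (2 * R * Real.sin t / (1 - R ^ 2))) := by
  set z : ℂ := (R : ℂ) * Complex.exp ((t : ℝ) * I) with hz
  have hznorm : ‖z‖ < 1 := by
    rw [hz]
    simp only [norm_mul, Complex.norm_real, Real.norm_eq_abs,
      Complex.norm_exp_ofReal_mul_I, mul_one]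
    exact hR
  have h2 := (hasSum_log_ratio hznorm).mapL Complex.imCLM
  -- compute the terms
  have hterm : (fun n : ℕ => Complex.imCLM (2 * z ^ (2 * n + 1) / ((2 * n + 1 : ℕ) : ℂ)))
      = fun n : ℕ => 2 * R ^ (2 * n + 1) * Real.sin (((2 * n + 1 : ℕ) : ℝ) * t)
        / ((2 * n + 1 : ℕ) : ℝ) := by
    funext n
    have hzp : z ^ (2 * n + 1)
        = ((R ^ (2 * n + 1) : ℝ) : ℂ) * Complex.exp ((((2 * n + 1 : ℕ) : ℝ) * t : ℝ) * I) := by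
      rw [hz, mul_pow, ← Complex.exp_nat_mul]
      push_cast
      ring_nf
    rw [Complex.imCLM_apply, hzp]
    rw [show (2 : ℂ) * (((R ^ (2 * n + 1) : ℝ) : ℂ)
          * Complex.exp ((((2 * n + 1 : ℕ) : ℝ) * t : ℝ) * I)) / ((2 * n + 1 : ℕ) : ℂ)
        = (((2 * R ^ (2 * n + 1) / ((2 * n + 1 : ℕ) : ℝ) : ℝ)) : ℂ)
          * Complex.exp ((((2 * n + 1 : ℕ) : ℝ) * t : ℝ) * I) by push_cast; ring]
    rw [Complex.im_ofReal_mul, Complex.exp_ofReal_mul_I_im]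
    ring
  rw [hterm] at h2
  -- compute the sum
  have hR2 : R ^ 2 < 1 := by nlinarith [abs_nonneg R, _root_.sq_abs R, hR]
  have hzne : (1 : ℂ) - z ≠ 0 := by
    intro h
    have : ‖(1 : ℂ)‖ = ‖z‖ := by rw [sub_eq_zero] at h; rw [h]
    simp at this
    linarith
  have hns : Complex.normSq (1 - z) > 0 := by
    rw [gt_iff_lt, Complex.normSq_pos]; exact hzne
  have hzre : z.re = R * Real.cos t := by
    rw [hz, Complex.re_ofReal_mul, Complex.exp_ofReal_mul_I_re]
  have hzim : z.im = R * Real.sin t := by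
    rw [hz, Complex.im_ofReal_mul, Complex.exp_ofReal_mul_I_im]
  set ζ : ℂ := (1 + z) / (1 - z) with hζ
  have hre : ζ.re = (1 - R ^ 2) / Complex.normSq (1 - z) := by
    rw [hζ, Complex.div_re]
    simp only [Complex.add_re, Complex.add_im, Complex.sub_re, Complex.sub_im,
      Complex.one_re, Complex.one_im, hzre, hzim]
    have := Real.sin_sq_add_cos_sq t
    field_simp
    nlinarith [this]
  have him : ζ.im = (2 * R * Real.sin t) / Complex.normSq (1 - z) := by
    rw [hζ, Complex.div_im]
    simp only [Complex.add_re, Complex.add_im, Complex.sub_re, Complex.sub_im,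
      Complex.one_re, Complex.one_im, hzre, hzim]
    ring
  have hrepos : 0 < ζ.re := by
    rw [hre]; exact div_pos (by linarith) hns
  have harg : ζ.arg = Real.arctan (2 * R * Real.sin t / (1 - R ^ 2)) := by
    have habs : |ζ.arg| < Real.pi / 2 := by
      rw [Complex.abs_arg_lt_pi_div_two_iff]; exact Or.inl hrepos
    have := Complex.tan_arg ζ
    have harctan : Real.arctan (Real.tan ζ.arg) = ζ.arg :=
      Real.arctan_tan (by linarith [abs_lt.mp habs |>.1]) (by linarith [abs_lt.mp habs |>.2])
    rw [← harctan, this, hre, him]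
    congr 1
    rw [div_div_div_cancel_right₀]
    · exact hns.ne'
  have hlogim : Complex.imCLM (Complex.log ζ) = Real.arctan (2 * R * Real.sin t / (1 - R ^ 2)) := by
    rw [Complex.imCLM_apply, Complex.log_im, harg]
  rwa [hlogim] at h2

noncomputable def Haux (n : ℕ) (t : ℝ) : ℝ :=
  2 * ∑ m ∈ Finset.range (n + 1),
      (t * Real.sin (((2 * m + 1 : ℕ) : ℝ) * t) / ((2 * m + 1 : ℕ) : ℝ)
        + Real.cos (((2 * m + 1 : ℕ) : ℝ) * t) / ((2 * m + 1 : ℕ) : ℝ) ^ 2)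
    - (t * Real.sin (((2 * n + 1 : ℕ) : ℝ) * t) / ((2 * n + 1 : ℕ) : ℝ)
        + Real.cos (((2 * n + 1 : ℕ) : ℝ) * t) / ((2 * n + 1 : ℕ) : ℝ) ^ 2)

lemma dirichlet (n : ℕ) (t : ℝ) :
    Real.sin (((2 * n + 1 : ℕ) : ℝ) * t) * Real.cos t
      = Real.sin t * (2 * ∑ m ∈ Finset.range (n + 1), Real.cos (((2 * m + 1 : ℕ) : ℝ) * t)
          - Real.cos (((2 * n + 1 : ℕ) : ℝ) * t)) := by
  induction n with
  | zero =>
    simp only [Finset.sum_range_one, Nat.mul_zero, Nat.zero_add, Nat.cast_one, one_mul,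
      Nat.cast_ofNat]
    push_cast
    ring
  | succ n ih =>
    rw [Finset.sum_range_succ]
    push_cast at ih ⊢
    rw [show (2 * ((n : ℝ) + 1) + 1) * t = (2 * (n : ℝ) + 1) * t + 2 * t by ring,
      Real.sin_add, Real.cos_add, Real.sin_two_mul, Real.cos_two_mul']
    linear_combination ih + (Real.sin ((2 * (n : ℝ) + 1) * t) * Real.cos t
      + Real.cos ((2 * (n : ℝ) + 1) * t) * Real.sin t) * (Real.sin_sq_add_cos_sq t)

lemma hasDerivAt_term (k : ℝ) (hk : k ≠ 0) (t : ℝ) :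
    HasDerivAt (fun t : ℝ => t * Real.sin (k * t) / k + Real.cos (k * t) / k ^ 2)
      (t * Real.cos (k * t)) t := by
  have hkt : HasDerivAt (fun t : ℝ => k * t) k t := by
    simpa using (hasDerivAt_id t).const_mul k
  have hsin : HasDerivAt (fun t : ℝ => Real.sin (k * t)) (Real.cos (k * t) * k) t := by
    simpa [Function.comp_def] using (Real.hasDerivAt_sin (k * t)).comp t hkt
  have hcos : HasDerivAt (fun t : ℝ => Real.cos (k * t)) (-Real.sin (k * t) * k) t := by
    simpa [Function.comp_def] using (Real.hasDerivAt_cos (k * t)).comp t hkt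
  have h1 : HasDerivAt (fun t : ℝ => t * Real.sin (k * t))
      (1 * Real.sin (k * t) + t * (Real.cos (k * t) * k)) t :=
    (hasDerivAt_id t).mul hsin
  have := (h1.div_const k).add (hcos.div_const (k ^ 2))
  refine this.congr_deriv ?_
  field_simp
  ring

lemma Haux_hasDerivAt (n : ℕ) (t : ℝ) :
    HasDerivAt (Haux n)
      (t * (2 * ∑ m ∈ Finset.range (n + 1), Real.cos (((2 * m + 1 : ℕ) : ℝ) * t)
          - Real.cos (((2 * n + 1 : ℕ) : ℝ) * t))) t := by
  have hk : ∀ m : ℕ, ((2 * m + 1 : ℕ) : ℝ) ≠ 0 := fun m => by positivity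
  have hsum : HasDerivAt (fun t : ℝ => ∑ m ∈ Finset.range (n + 1),
      (t * Real.sin (((2 * m + 1 : ℕ) : ℝ) * t) / ((2 * m + 1 : ℕ) : ℝ)
        + Real.cos (((2 * m + 1 : ℕ) : ℝ) * t) / ((2 * m + 1 : ℕ) : ℝ) ^ 2))
      (∑ m ∈ Finset.range (n + 1), t * Real.cos (((2 * m + 1 : ℕ) : ℝ) * t)) t := by
    exact HasDerivAt.fun_sum (fun m _ => hasDerivAt_term _ (hk m) t)
  have := (hsum.const_mul 2).sub (hasDerivAt_term _ (hk n) t)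
  refine this.congr_deriv ?_
  rw [mul_sub]
  congr 1
  · simp only [Finset.mul_sum]
    exact Finset.sum_congr rfl fun m _ => by ring

lemma abs_arcsin_le {y : ℝ} (hy : |y| ≤ 1) : |Real.arcsin y| ≤ Real.pi / 2 * |y| := by
  have h1 : |Real.arcsin y| = Real.arcsin |y| := by
    rcases abs_cases y with ⟨h, hy0⟩ | ⟨h, hy0⟩
    · rw [h, abs_of_nonneg (Real.arcsin_nonneg.mpr hy0)]
    · rw [h, Real.arcsin_neg, abs_of_nonpos]
      exact Real.arcsin_nonpos.mpr hy0.le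
  rw [h1]
  have h2 : Real.sin (Real.arcsin |y|) = |y| := Real.sin_arcsin (by linarith [abs_nonneg y]) hy
  have h3 := Real.mul_le_sin (Real.arcsin_nonneg.mpr (abs_nonneg y))
    (Real.arcsin_le_pi_div_two |y|)
  rw [h2] at h3
  have hπ : 0 < Real.pi := Real.pi_pos
  calc Real.arcsin |y| = Real.pi / 2 * (2 / Real.pi * Real.arcsin |y|) := by
        field_simp
    _ ≤ Real.pi / 2 * |y| := by
        apply mul_le_mul_of_nonneg_left h3 (by positivity)

lemma integrableOn_Ioc_of_bound {f : ℝ → ℝ} {C : ℝ}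
    (hm : AEStronglyMeasurable f (volume.restrict (Set.Ioc (0:ℝ) 1)))
    (hb : ∀ x ∈ Set.Ioc (0:ℝ) 1, |f x| ≤ C) :
    IntegrableOn f (Set.Ioc (0:ℝ) 1) := by
  haveI : IsFiniteMeasure (volume.restrict (Set.Ioc (0:ℝ) 1)) :=
    ⟨by rw [Measure.restrict_apply_univ]; simp [Real.volume_Ioc]⟩
  refine ⟨hm, MeasureTheory.HasFiniteIntegral.of_bounded (C := C) ?_⟩
  rw [ae_restrict_iff' measurableSet_Ioc]
  exact Filter.Eventually.of_forall fun x hx => by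
    simpa [Real.norm_eq_abs] using hb x hx

lemma Haux_continuous (n : ℕ) : Continuous (Haux n) := by
  unfold Haux
  fun_prop

lemma integrand_measurable {w : ℝ} (k : ℝ) :
    Measurable (fun x : ℝ => Real.sin (k * Real.arcsin (w * x)) * Real.arcsin (w * x) / x) := by
  apply Measurable.div
  · have hc : Continuous fun x : ℝ =>
        Real.sin (k * Real.arcsin (w * x)) * Real.arcsin (w * x) := by
      exact (Real.continuous_sin.comp (continuous_const.mul
        (Real.continuous_arcsin.comp (continuous_const.mul continuous_id)))).mul
        (Real.continuous_arcsin.comp (continuous_const.mul continuous_id))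
    exact hc.measurable
  · exact measurable_id

lemma J_eq {w : ℝ} (hw : |w| ≤ 1) (hw0 : w ≠ 0) (n : ℕ) :
    ∫ x in (0:ℝ)..1,
        Real.sin (((2 * n + 1 : ℕ) : ℝ) * Real.arcsin (w * x)) * Real.arcsin (w * x) / x
      = Haux n (Real.arcsin w) - Haux n 0 := by
  set k : ℝ := ((2 * n + 1 : ℕ) : ℝ) with hk
  set f' : ℝ → ℝ := fun x => Real.sin (k * Real.arcsin (w * x)) * Real.arcsin (w * x) / x
    with hf'
  set F : ℝ → ℝ := fun x => Haux n (Real.arcsin (w * x)) with hF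
  have hwx : ∀ x : ℝ, x ∈ Set.Icc (0:ℝ) 1 → |w * x| ≤ 1 := by
    intro x hx
    rw [abs_mul, abs_of_nonneg hx.1]
    calc |w| * x ≤ 1 * 1 := mul_le_mul hw hx.2 hx.1 zero_le_one
      _ = 1 := by norm_num
  have hcont : ContinuousOn F (Set.Icc 0 1) :=
    ((Haux_continuous n).comp
      (Real.continuous_arcsin.comp (continuous_const.mul continuous_id))).continuousOn
  have hderiv : ∀ x ∈ Set.Ioo (0:ℝ) 1, HasDerivWithinAt F (f' x) (Set.Ioi x) x := by
    intro x hx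
    have hwxlt : |w * x| < 1 := by
      rw [abs_mul, abs_of_nonneg hx.1.le]
      calc |w| * x ≤ 1 * x := mul_le_mul_of_nonneg_right hw hx.1.le
        _ = x := one_mul x
        _ < 1 := hx.2
    have harc : HasDerivAt (fun x : ℝ => Real.arcsin (w * x))
        (1 / Real.sqrt (1 - (w * x) ^ 2) * w) x := by
      have hmul : HasDerivAt (fun x : ℝ => w * x) w x := by
        simpa using (hasDerivAt_id x).const_mul w
      exact (Real.hasDerivAt_arcsin
        (by intro h; rw [h] at hwxlt; norm_num at hwxlt)
        (by intro h; rw [h] at hwxlt; norm_num at hwxlt)).comp x hmul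
    set t : ℝ := Real.arcsin (w * x) with ht
    have hD := (Haux_hasDerivAt n t).comp x harc
    have ht_sin : Real.sin t = w * x :=
      Real.sin_arcsin (by linarith [abs_lt.mp hwxlt |>.1]) (by linarith [abs_lt.mp hwxlt |>.2])
    have ht_cos : Real.cos t = Real.sqrt (1 - (w * x) ^ 2) := Real.cos_arcsin _
    have hcpos : 0 < Real.cos t := by
      rw [ht_cos, show (0:ℝ) = Real.sqrt 0 by simp]
      apply Real.sqrt_lt_sqrt le_rfl
      nlinarith [abs_nonneg (w * x), sq_abs (w * x)]
    have hxne : x ≠ 0 := hx.1.ne'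
    have dir := dirichlet n t
    rw [ht_sin] at dir
    rw [← hk] at dir
    have heq : (t * (2 * ∑ m ∈ Finset.range (n + 1), Real.cos (((2 * m + 1 : ℕ) : ℝ) * t)
        - Real.cos (((2 * n + 1 : ℕ) : ℝ) * t))) * (1 / Real.sqrt (1 - (w * x) ^ 2) * w)
        = Real.sin (k * t) * t / x := by
      rw [← ht_cos, ← hk]
      push_cast at dir ⊢
      field_simp
      linear_combination (norm := ring_nf) (-t) * dir
    rw [heq] at hD
    exact hD.hasDerivWithinAt
  have hbound : ∀ x ∈ Set.Ioc (0:ℝ) 1, |f' x| ≤ Real.pi / 2 * |w| := by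
    intro x hx
    have h1 : |w * x| ≤ 1 := hwx x ⟨hx.1.le, hx.2⟩
    have h2 : |Real.arcsin (w * x)| ≤ Real.pi / 2 * (|w| * x) := by
      have := abs_arcsin_le h1
      rwa [abs_mul, abs_of_nonneg hx.1.le] at this
    have hxne : x ≠ 0 := hx.1.ne'
    rw [hf']
    rw [abs_div, abs_mul, abs_of_pos hx.1]
    calc |Real.sin (k * Real.arcsin (w * x))| * |Real.arcsin (w * x)| / x
        ≤ 1 * (Real.pi / 2 * (|w| * x)) / x := by
          gcongr
          all_goals first
            | positivity
            | exact Real.abs_sin_le_one _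
            | exact h2
            | exact hx.1.le
      _ = Real.pi / 2 * |w| := by field_simp
  have hint : IntervalIntegrable f' volume 0 1 := by
    rw [intervalIntegrable_iff_integrableOn_Ioc_of_le (by norm_num : (0:ℝ) ≤ 1)]
    exact integrableOn_Ioc_of_bound (integrand_measurable k).aestronglyMeasurable hbound
  have := intervalIntegral.integral_eq_sub_of_hasDeriv_right_of_le (by norm_num : (0:ℝ) ≤ 1)
    hcont hderiv hint
  rw [this, hF]
  norm_num


lemma step1 {v w R : ℝ} (hw : |w| ≤ 1) (hw0 : w ≠ 0) (hR : |R| < 1)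
    (hv : v * (1 - R ^ 2) = 2 * R * w) :
    TS v w = ∑' n : ℕ, 2 * R ^ (2 * n + 1) / ((2 * n + 1 : ℕ) : ℝ)
      * (Haux n (Real.arcsin w) - Haux n 0) := by
  have hR2 : R ^ 2 < 1 := by nlinarith [abs_nonneg R, _root_.sq_abs R, hR]
  set f : ℕ → ℝ → ℝ := fun n x =>
    (2 * R ^ (2 * n + 1) * Real.sin (((2 * n + 1 : ℕ) : ℝ) * Real.arcsin (w * x))
      / ((2 * n + 1 : ℕ) : ℝ)) * (Real.arcsin (w * x) / x) with hf
  -- pointwise identity on Ioc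
  have hpt : ∀ x ∈ Set.Ioc (0:ℝ) 1,
      Real.arctan (v * x) * Real.arcsin (w * x) / x = ∑' n : ℕ, f n x := by
    intro x hx
    have hwx1 : |w * x| ≤ 1 := by
      rw [abs_mul, abs_of_nonneg hx.1.le]
      calc |w| * x ≤ 1 * 1 := mul_le_mul hw hx.2 hx.1.le zero_le_one
        _ = 1 := by norm_num
    have hsin : Real.sin (Real.arcsin (w * x)) = w * x :=
      Real.sin_arcsin (by linarith [abs_le.mp hwx1 |>.1]) (abs_le.mp hwx1 |>.2)
    have hs := hasSum_arctan_sin hR (Real.arcsin (w * x))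
    rw [hsin] at hs
    have harg : 2 * R * (w * x) / (1 - R ^ 2) = v * x := by
      rw [div_eq_iff (by nlinarith : (1:ℝ) - R ^ 2 ≠ 0)]
      linear_combination (-x) * hv
    rw [harg] at hs
    have := (hs.mul_right (Real.arcsin (w * x) / x)).tsum_eq
    rw [mul_div_assoc, ← this]
  -- integrability and bounds
  have hmeas : ∀ n : ℕ, AEStronglyMeasurable (f n)
      (volume.restrict (Set.Ioc (0:ℝ) 1)) := by
    intro n
    apply Measurable.aestronglyMeasurable
    apply Measurable.mul
    · exact ((continuous_const.mul (Real.continuous_sin.comp (continuous_const.mul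
        (Real.continuous_arcsin.comp (continuous_const.mul continuous_id))))).div_const
          _).measurable
    · exact ((Real.continuous_arcsin.comp
        (continuous_const.mul continuous_id)).measurable).div measurable_id
  have hbound : ∀ n : ℕ, ∀ x ∈ Set.Ioc (0:ℝ) 1,
      |f n x| ≤ Real.pi * |w| * |R| ^ (2 * n + 1) := by
    intro n x hx
    have hwx1 : |w * x| ≤ 1 := by
      rw [abs_mul, abs_of_nonneg hx.1.le]
      calc |w| * x ≤ 1 * 1 := mul_le_mul hw hx.2 hx.1.le zero_le_one
        _ = 1 := by norm_num
    have h2 : |Real.arcsin (w * x) / x| ≤ Real.pi / 2 * |w| := by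
      rw [abs_div, abs_of_pos hx.1, div_le_iff₀ hx.1]
      calc |Real.arcsin (w * x)| ≤ Real.pi / 2 * |w * x| := abs_arcsin_le hwx1
        _ = Real.pi / 2 * |w| * x := by rw [abs_mul, abs_of_nonneg hx.1.le]; ring
    have h1 : |2 * R ^ (2 * n + 1) * Real.sin (((2 * n + 1 : ℕ) : ℝ) * Real.arcsin (w * x))
        / ((2 * n + 1 : ℕ) : ℝ)| ≤ 2 * |R| ^ (2 * n + 1) := by
      rw [abs_div, abs_mul, abs_mul, abs_two, abs_pow]
      have hk1 : (1:ℝ) ≤ ((2 * n + 1 : ℕ) : ℝ) := by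
        exact_mod_cast Nat.one_le_iff_ne_zero.mpr (by omega)
      have hkpos : (0:ℝ) < ((2 * n + 1 : ℕ) : ℝ) := by linarith
      calc 2 * |R| ^ (2 * n + 1) * |Real.sin (((2 * n + 1 : ℕ) : ℝ) * Real.arcsin (w * x))|
            / |((2 * n + 1 : ℕ) : ℝ)|
          ≤ 2 * |R| ^ (2 * n + 1) * 1 / 1 := by
            gcongr
            all_goals first
              | exact Real.abs_sin_le_one _
              | (rw [abs_of_pos hkpos]; exact hk1)
              | positivity
      _ = 2 * |R| ^ (2 * n + 1) := by ring
    calc |f n x| = |2 * R ^ (2 * n + 1) * Real.sin (((2 * n + 1 : ℕ) : ℝ) * Real.arcsin (w * x))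
          / ((2 * n + 1 : ℕ) : ℝ)| * |Real.arcsin (w * x) / x| := by rw [hf]; exact abs_mul _ _
      _ ≤ 2 * |R| ^ (2 * n + 1) * (Real.pi / 2 * |w|) := by
          exact mul_le_mul h1 h2 (abs_nonneg _) (by positivity)
      _ = Real.pi * |w| * |R| ^ (2 * n + 1) := by ring
  have hint : ∀ n : ℕ, IntegrableOn (f n) (Set.Ioc (0:ℝ) 1) :=
    fun n => integrableOn_Ioc_of_bound (hmeas n) (hbound n)
  haveI : IsFiniteMeasure (volume.restrict (Set.Ioc (0:ℝ) 1)) :=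
    ⟨by rw [Measure.restrict_apply_univ]; simp [Real.volume_Ioc]⟩
  have hnormint : ∀ n : ℕ, ∫ x in Set.Ioc (0:ℝ) 1, ‖f n x‖
      ≤ Real.pi * |w| * |R| ^ (2 * n + 1) := by
    intro n
    have hle : ∀ᵐ x ∂(volume.restrict (Set.Ioc (0:ℝ) 1)),
        ‖f n x‖ ≤ Real.pi * |w| * |R| ^ (2 * n + 1) := by
      rw [ae_restrict_iff' measurableSet_Ioc]
      exact Filter.Eventually.of_forall fun x hx => by
        simpa [Real.norm_eq_abs] using hbound n x hx
    calc ∫ x in Set.Ioc (0:ℝ) 1, ‖f n x‖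
        ≤ ∫ _ in Set.Ioc (0:ℝ) 1, Real.pi * |w| * |R| ^ (2 * n + 1) := by
          apply integral_mono_ae (hint n).norm (integrable_const _) hle
      _ = Real.pi * |w| * |R| ^ (2 * n + 1) := by
          rw [setIntegral_const]
          simp [Real.volume_Ioc]
  have hBsum : Summable (fun n : ℕ => Real.pi * |w| * |R| ^ (2 * n + 1)) := by
    have : Summable (fun n : ℕ => |R| ^ (2 * n + 1)) := by
      have hgeo : Summable (fun n : ℕ => (|R| ^ 2) ^ n) :=
        summable_geometric_of_lt_one (by positivity) (by rwa [_root_.sq_abs])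
      apply Summable.of_nonneg_of_le (fun n => by positivity) (fun n => ?_) (hgeo.mul_left |R|)
      rw [pow_succ, pow_mul]
      exact le_of_eq (mul_comm _ _)
    exact this.mul_left _
  have hsumnorm : Summable (fun n : ℕ => ∫ x in Set.Ioc (0:ℝ) 1, ‖f n x‖) :=
    Summable.of_nonneg_of_le (fun n => integral_nonneg (fun x => norm_nonneg _))
      hnormint hBsum
  -- put it together
  have h0 : TS v w = ∫ x in Set.Ioc (0:ℝ) 1, Real.arctan (v * x) * Real.arcsin (w * x) / x := by
    rw [TS, intervalIntegral.integral_of_le (by norm_num : (0:ℝ) ≤ 1)]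
  rw [h0, setIntegral_congr_ae measurableSet_Ioc (Filter.Eventually.of_forall hpt),
    ← MeasureTheory.integral_tsum_of_summable_integral_norm hint hsumnorm]
  congr 1
  funext n
  rw [← J_eq hw hw0 n, intervalIntegral.integral_of_le (by norm_num : (0:ℝ) ≤ 1)]
  rw [← MeasureTheory.integral_const_mul]
  apply setIntegral_congr_ae measurableSet_Ioc
  apply Filter.Eventually.of_forall
  intro x hx
  rw [hf]
  ring



lemma cast_k_ge (k : ℕ) : (1:ℝ) ≤ ((2 * k + 1 : ℕ) : ℝ) := by
  exact_mod_cast Nat.one_le_iff_ne_zero.mpr (by omega)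

lemma norm_term_le (j : ℕ) (x : ℂ) (n : ℕ) :
    ‖x ^ (2 * n + 1) / ((2 * n + 1 : ℕ) : ℂ) ^ j‖ ≤ ‖x‖ ^ (2 * n + 1) := by
  rw [norm_div, norm_pow, norm_pow]
  have h1 : (1:ℝ) ≤ ‖((2 * n + 1 : ℕ) : ℂ)‖ := by
    rw [Complex.norm_natCast]
    exact cast_k_ge n
  calc ‖x‖ ^ (2 * n + 1) / ‖((2 * n + 1 : ℕ) : ℂ)‖ ^ j
      ≤ ‖x‖ ^ (2 * n + 1) / 1 := by
        gcongr
        exact one_le_pow₀ h1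
    _ = ‖x‖ ^ (2 * n + 1) := by ring

lemma summable_odd_geom {r : ℝ} (hr : 0 ≤ r) (h : r < 1) :
    Summable (fun n : ℕ => r ^ (2 * n + 1)) := by
  have hgeo : Summable (fun n : ℕ => (r ^ 2) ^ n) :=
    summable_geometric_of_lt_one (by positivity) (by nlinarith)
  apply Summable.of_nonneg_of_le (fun n => by positivity) (fun n => ?_) (hgeo.mul_left r)
  rw [pow_succ, pow_mul]
  exact le_of_eq (mul_comm _ _)

lemma summable_Fc (j : ℕ) (x : ℂ) (hx : ‖x‖ < 1) :
    Summable (fun n : ℕ => x ^ (2 * n + 1) / ((2 * n + 1 : ℕ) : ℂ) ^ j) :=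
  Summable.of_norm_bounded (summable_odd_geom (norm_nonneg x) hx) (norm_term_le j x)

lemma summable_Fcc (j k : ℕ) (x y : ℂ) (hx : ‖x‖ < 1) (hy : ‖y‖ ≤ 1) :
    Summable (fun n : ℕ => (x ^ (2 * n + 1) / ((2 * n + 1 : ℕ) : ℂ) ^ j) *
      ∑ m ∈ Finset.range (n + 1), y ^ (2 * m + 1) / ((2 * m + 1 : ℕ) : ℂ) ^ k) := by
  have hinner : ∀ n : ℕ, ‖∑ m ∈ Finset.range (n + 1), y ^ (2 * m + 1)
      / ((2 * m + 1 : ℕ) : ℂ) ^ k‖ ≤ (n : ℝ) + 1 := by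
    intro n
    calc ‖∑ m ∈ Finset.range (n + 1), y ^ (2 * m + 1) / ((2 * m + 1 : ℕ) : ℂ) ^ k‖
        ≤ ∑ m ∈ Finset.range (n + 1), ‖y ^ (2 * m + 1) / ((2 * m + 1 : ℕ) : ℂ) ^ k‖ :=
          norm_sum_le _ _
      _ ≤ ∑ m ∈ Finset.range (n + 1), 1 := by
          apply Finset.sum_le_sum
          intro m _
          calc ‖y ^ (2 * m + 1) / ((2 * m + 1 : ℕ) : ℂ) ^ k‖ ≤ ‖y‖ ^ (2 * m + 1) :=
              norm_term_le k y m
            _ ≤ 1 := pow_le_one₀ (norm_nonneg y) hy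
      _ = (n : ℝ) + 1 := by simp
  have hq : ‖x‖ ^ 2 < 1 := by nlinarith [norm_nonneg x]
  have hs1 : Summable (fun n : ℕ => ‖x‖ * ((n : ℝ) * (‖x‖ ^ 2) ^ n + (‖x‖ ^ 2) ^ n)) := by
    apply Summable.mul_left
    apply Summable.add
    · simpa using summable_pow_mul_geometric_of_norm_lt_one 1
        (show ‖(‖x‖ ^ 2 : ℝ)‖ < 1 by rwa [Real.norm_eq_abs, abs_of_nonneg (by positivity)])
    · exact summable_geometric_of_lt_one (by positivity) hq
  apply Summable.of_norm_bounded hs1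
  intro n
  rw [norm_mul]
  calc ‖x ^ (2 * n + 1) / ((2 * n + 1 : ℕ) : ℂ) ^ j‖
        * ‖∑ m ∈ Finset.range (n + 1), y ^ (2 * m + 1) / ((2 * m + 1 : ℕ) : ℂ) ^ k‖
      ≤ ‖x‖ ^ (2 * n + 1) * ((n : ℝ) + 1) :=
        mul_le_mul (norm_term_le j x n) (hinner n) (norm_nonneg _) (by positivity)
    _ = ‖x‖ * ((n : ℝ) * (‖x‖ ^ 2) ^ n + (‖x‖ ^ 2) ^ n) := by
        rw [pow_succ, pow_mul]
        ring

lemma Spow_eq {θ : ℝ} {S : ℂ} (hS : S = Complex.exp ((θ : ℂ) * Complex.I)) (k : ℕ) :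
    S ^ k = Complex.cos (((k : ℝ) * θ : ℝ)) + Complex.sin (((k : ℝ) * θ : ℝ)) * Complex.I := by
  rw [hS, ← Complex.exp_nat_mul, show ((k : ℂ)) * ((θ : ℂ) * Complex.I)
    = (((k : ℝ) * θ : ℝ) : ℂ) * Complex.I by push_cast; ring, Complex.exp_mul_I]

lemma Sinvpow_eq {θ : ℝ} {S : ℂ} (hS : S = Complex.exp ((θ : ℂ) * Complex.I)) (k : ℕ) :
    (1 / S) ^ k = Complex.cos (((k : ℝ) * θ : ℝ)) - Complex.sin (((k : ℝ) * θ : ℝ)) * Complex.I := by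
  rw [hS, one_div, ← Complex.exp_neg, ← Complex.exp_nat_mul,
    show ((k : ℂ)) * (-((θ : ℂ) * Complex.I)) = ((-((k : ℝ) * θ) : ℝ) : ℂ) * Complex.I by
      push_cast; ring,
    Complex.exp_mul_I]
  push_cast
  rw [Complex.cos_neg, Complex.sin_neg]
  ring

lemma cast_sin {θ : ℝ} {S : ℂ} (hS : S = Complex.exp ((θ : ℂ) * Complex.I)) (k : ℕ) :
    ((Real.sin ((k : ℝ) * θ) : ℝ) : ℂ) = (S ^ k - (1 / S) ^ k) * (-Complex.I) / 2 := by
  rw [Spow_eq hS k, Sinvpow_eq hS k, Complex.ofReal_sin]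
  linear_combination (Complex.sin ((((k : ℝ) * θ : ℝ)) : ℂ)) * Complex.I_sq

lemma cast_cos {θ : ℝ} {S : ℂ} (hS : S = Complex.exp ((θ : ℂ) * Complex.I)) (k : ℕ) :
    ((Real.cos ((k : ℝ) * θ) : ℝ) : ℂ) = (S ^ k + (1 / S) ^ k) / 2 := by
  rw [Spow_eq hS k, Sinvpow_eq hS k, Complex.ofReal_cos]
  ring

lemma Haux_zero (n : ℕ) : Haux n 0
    = 2 * ∑ m ∈ Finset.range (n + 1), 1 / ((2 * m + 1 : ℕ) : ℝ) ^ 2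
      - 1 / ((2 * n + 1 : ℕ) : ℝ) ^ 2 := by
  simp [Haux]

lemma perterm {θ R : ℝ} {S : ℂ} (hS : S = Complex.exp ((θ : ℂ) * Complex.I)) (n : ℕ) :
    ((2 * R ^ (2 * n + 1) / ((2 * n + 1 : ℕ) : ℝ) * (Haux n θ - Haux n 0) : ℝ) : ℂ)
    = 2 * ((R : ℂ) ^ (2 * n + 1) / ((2 * n + 1 : ℕ) : ℂ) ^ 3)
      - (R : ℂ) ^ (2 * n + 1) * S ^ (2 * n + 1) / ((2 * n + 1 : ℕ) : ℂ) ^ 3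
      - (R : ℂ) ^ (2 * n + 1) * (1 / S) ^ (2 * n + 1) / ((2 * n + 1 : ℕ) : ℂ) ^ 3
      - 4 * (((R : ℂ) ^ (2 * n + 1) / ((2 * n + 1 : ℕ) : ℂ) ^ 1) *
          ∑ m ∈ Finset.range (n + 1), 1 / ((2 * m + 1 : ℕ) : ℂ) ^ 2)
      + 2 * (((R : ℂ) ^ (2 * n + 1) / ((2 * n + 1 : ℕ) : ℂ) ^ 1) *
          ∑ m ∈ Finset.range (n + 1), S ^ (2 * m + 1) / ((2 * m + 1 : ℕ) : ℂ) ^ 2)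
      + 2 * (((R : ℂ) ^ (2 * n + 1) / ((2 * n + 1 : ℕ) : ℂ) ^ 1) *
          ∑ m ∈ Finset.range (n + 1), (1 / S) ^ (2 * m + 1) / ((2 * m + 1 : ℕ) : ℂ) ^ 2)
      + Complex.I * (θ : ℂ) *
          ((R : ℂ) ^ (2 * n + 1) * S ^ (2 * n + 1) / ((2 * n + 1 : ℕ) : ℂ) ^ 2
            - (R : ℂ) ^ (2 * n + 1) * (1 / S) ^ (2 * n + 1) / ((2 * n + 1 : ℕ) : ℂ) ^ 2
            - 2 * (((R : ℂ) ^ (2 * n + 1) / ((2 * n + 1 : ℕ) : ℂ) ^ 1) *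
                ∑ m ∈ Finset.range (n + 1), S ^ (2 * m + 1) / ((2 * m + 1 : ℕ) : ℂ) ^ 1)
            + 2 * (((R : ℂ) ^ (2 * n + 1) / ((2 * n + 1 : ℕ) : ℂ) ^ 1) *
                ∑ m ∈ Finset.range (n + 1), (1 / S) ^ (2 * m + 1) / ((2 * m + 1 : ℕ) : ℂ) ^ 1)) := by
  rw [Haux_zero]
  rw [show Haux n θ = 2 * ∑ m ∈ Finset.range (n + 1),
      (θ * Real.sin (((2 * m + 1 : ℕ) : ℝ) * θ) / ((2 * m + 1 : ℕ) : ℝ)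
        + Real.cos (((2 * m + 1 : ℕ) : ℝ) * θ) / ((2 * m + 1 : ℕ) : ℝ) ^ 2)
    - (θ * Real.sin (((2 * n + 1 : ℕ) : ℝ) * θ) / ((2 * n + 1 : ℕ) : ℝ)
        + Real.cos (((2 * n + 1 : ℕ) : ℝ) * θ) / ((2 * n + 1 : ℕ) : ℝ) ^ 2) from rfl]
  simp only [Complex.ofReal_mul, Complex.ofReal_div, Complex.ofReal_sub, Complex.ofReal_add,
    Complex.ofReal_pow, Complex.ofReal_natCast, Complex.ofReal_sum, Complex.ofReal_one,
    Complex.ofReal_ofNat]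
  simp only [cast_sin hS, cast_cos hS]
  have hsplit : ∑ m ∈ Finset.range (n + 1),
      ((θ : ℂ) * ((S ^ (2 * m + 1) - (1 / S) ^ (2 * m + 1)) * (-Complex.I) / 2)
          / ((2 * m + 1 : ℕ) : ℂ)
        + (S ^ (2 * m + 1) + (1 / S) ^ (2 * m + 1)) / 2 / ((2 * m + 1 : ℕ) : ℂ) ^ 2)
      = (-Complex.I * (θ : ℂ) / 2) *
          ∑ m ∈ Finset.range (n + 1), S ^ (2 * m + 1) / ((2 * m + 1 : ℕ) : ℂ) ^ 1
        + (Complex.I * (θ : ℂ) / 2) *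
          ∑ m ∈ Finset.range (n + 1), (1 / S) ^ (2 * m + 1) / ((2 * m + 1 : ℕ) : ℂ) ^ 1
        + (1 / 2) * ∑ m ∈ Finset.range (n + 1), S ^ (2 * m + 1) / ((2 * m + 1 : ℕ) : ℂ) ^ 2
        + (1 / 2) * ∑ m ∈ Finset.range (n + 1), (1 / S) ^ (2 * m + 1)
            / ((2 * m + 1 : ℕ) : ℂ) ^ 2 := by
    rw [Finset.mul_sum, Finset.mul_sum, Finset.mul_sum, Finset.mul_sum,
      ← Finset.sum_add_distrib, ← Finset.sum_add_distrib, ← Finset.sum_add_distrib]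
    exact Finset.sum_congr rfl fun m _ => by ring
  rw [hsplit]
  ring

theorem TS_eq_multiple_polylogs (v w : ℝ) (hw : w ∈ Set.Icc (-1 : ℝ) 1) (hw0 : w ≠ 0)
    (R : ℝ) (hR : R = (v / w) / (1 + Real.sqrt (1 + (v / w) ^ 2)))
    (S : ℂ) (hS : S = Complex.I * (w : ℂ) + (Real.sqrt (1 - w ^ 2) : ℝ)) :
    (TS v w : ℂ) =
      2 * Fc 3 (R : ℂ) - Fc 3 ((R : ℂ) * S) - Fc 3 ((R : ℂ) / S)
        - 4 * Fcc 1 2 (R : ℂ) 1 + 2 * Fcc 1 2 (R : ℂ) S + 2 * Fcc 1 2 (R : ℂ) (1 / S)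
        + Complex.I * (Real.arcsin w : ℂ) *
          (Fc 2 ((R : ℂ) * S) - Fc 2 ((R : ℂ) / S)
            - 2 * Fcc 1 1 (R : ℂ) S + 2 * Fcc 1 1 (R : ℂ) (1 / S)) := by
  obtain ⟨hw1, hw2⟩ := hw
  have habsw : |w| ≤ 1 := abs_le.mpr ⟨hw1, hw2⟩
  have hRabs : |R| < 1 := by rw [hR]; exact absR_lt_one (v / w)
  have hv : v * (1 - R ^ 2) = 2 * R * w := by
    have h := R_key (v / w)
    rw [← hR] at h
    field_simp at h
    linear_combination -h
  set θ : ℝ := Real.arcsin w with hθ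
  have hSexp : S = Complex.exp ((θ : ℂ) * Complex.I) := by
    rw [hS, Complex.exp_mul_I, ← Complex.ofReal_cos, ← Complex.ofReal_sin,
      hθ, Real.cos_arcsin, Real.sin_arcsin hw1 hw2]
    ring
  have hSnorm : ‖S‖ = 1 := by
    rw [hSexp, Complex.norm_exp_ofReal_mul_I]
  have hSinorm : ‖1 / S‖ = 1 := by
    rw [norm_div, hSnorm, norm_one, div_one]
  have hRn : ‖(R : ℂ)‖ < 1 := by
    rw [Complex.norm_real, Real.norm_eq_abs]; exact hRabs
  have hRSn : ‖(R : ℂ) * S‖ < 1 := by rw [norm_mul, hSnorm, mul_one]; exact hRn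
  have hRSin : ‖(R : ℂ) / S‖ < 1 := by
    rw [norm_div, hSnorm, div_one]; exact hRn
  -- HasSum facts in canonical form
  have hA3 : HasSum (fun n : ℕ => (R : ℂ) ^ (2 * n + 1) / ((2 * n + 1 : ℕ) : ℂ) ^ 3)
      (Fc 3 (R : ℂ)) := (summable_Fc 3 _ hRn).hasSum
  have hB3 : HasSum (fun n : ℕ => (R : ℂ) ^ (2 * n + 1) * S ^ (2 * n + 1)
      / ((2 * n + 1 : ℕ) : ℂ) ^ 3) (Fc 3 ((R : ℂ) * S)) := by
    have hsf := summable_Fc 3 ((R : ℂ) * S) hRSn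
    simp only [mul_pow] at hsf
    refine hsf.hasSum_iff.mpr ?_
    rw [Fc]
    exact tsum_congr fun n => by rw [mul_pow]
  have hC3 : HasSum (fun n : ℕ => (R : ℂ) ^ (2 * n + 1) * (1 / S) ^ (2 * n + 1)
      / ((2 * n + 1 : ℕ) : ℂ) ^ 3) (Fc 3 ((R : ℂ) / S)) := by
    have hsf := summable_Fc 3 ((R : ℂ) / S) hRSin
    simp only [show (R : ℂ) / S = (R : ℂ) * (1 / S) by ring, mul_pow] at hsf
    refine hsf.hasSum_iff.mpr ?_
    rw [Fc]
    exact tsum_congr fun n => by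
      rw [show (R : ℂ) / S = (R : ℂ) * (1 / S) by ring, mul_pow]
  have hB2 : HasSum (fun n : ℕ => (R : ℂ) ^ (2 * n + 1) * S ^ (2 * n + 1)
      / ((2 * n + 1 : ℕ) : ℂ) ^ 2) (Fc 2 ((R : ℂ) * S)) := by
    have hsf := summable_Fc 2 ((R : ℂ) * S) hRSn
    simp only [mul_pow] at hsf
    refine hsf.hasSum_iff.mpr ?_
    rw [Fc]
    exact tsum_congr fun n => by rw [mul_pow]
  have hC2 : HasSum (fun n : ℕ => (R : ℂ) ^ (2 * n + 1) * (1 / S) ^ (2 * n + 1)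
      / ((2 * n + 1 : ℕ) : ℂ) ^ 2) (Fc 2 ((R : ℂ) / S)) := by
    have hsf := summable_Fc 2 ((R : ℂ) / S) hRSin
    simp only [show (R : ℂ) / S = (R : ℂ) * (1 / S) by ring, mul_pow] at hsf
    refine hsf.hasSum_iff.mpr ?_
    rw [Fc]
    exact tsum_congr fun n => by
      rw [show (R : ℂ) / S = (R : ℂ) * (1 / S) by ring, mul_pow]
  have hD : HasSum (fun n : ℕ => ((R : ℂ) ^ (2 * n + 1) / ((2 * n + 1 : ℕ) : ℂ) ^ 1) *
      ∑ m ∈ Finset.range (n + 1), 1 / ((2 * m + 1 : ℕ) : ℂ) ^ 2)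
      (Fcc 1 2 (R : ℂ) 1) := by
    have hsf := summable_Fcc 1 2 (R : ℂ) 1 hRn (by norm_num)
    simp only [one_pow] at hsf
    refine hsf.hasSum_iff.mpr ?_
    rw [Fcc]
    exact tsum_congr fun n => by simp only [one_pow]
  have hE : HasSum (fun n : ℕ => ((R : ℂ) ^ (2 * n + 1) / ((2 * n + 1 : ℕ) : ℂ) ^ 1) *
      ∑ m ∈ Finset.range (n + 1), S ^ (2 * m + 1) / ((2 * m + 1 : ℕ) : ℂ) ^ 2)
      (Fcc 1 2 (R : ℂ) S) :=
    (summable_Fcc 1 2 (R : ℂ) S hRn hSnorm.le).hasSum_iff.mpr (by rw [Fcc])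
  have hF : HasSum (fun n : ℕ => ((R : ℂ) ^ (2 * n + 1) / ((2 * n + 1 : ℕ) : ℂ) ^ 1) *
      ∑ m ∈ Finset.range (n + 1), (1 / S) ^ (2 * m + 1) / ((2 * m + 1 : ℕ) : ℂ) ^ 2)
      (Fcc 1 2 (R : ℂ) (1 / S)) :=
    (summable_Fcc 1 2 (R : ℂ) (1 / S) hRn hSinorm.le).hasSum_iff.mpr (by rw [Fcc])
  have hG : HasSum (fun n : ℕ => ((R : ℂ) ^ (2 * n + 1) / ((2 * n + 1 : ℕ) : ℂ) ^ 1) *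
      ∑ m ∈ Finset.range (n + 1), S ^ (2 * m + 1) / ((2 * m + 1 : ℕ) : ℂ) ^ 1)
      (Fcc 1 1 (R : ℂ) S) :=
    (summable_Fcc 1 1 (R : ℂ) S hRn hSnorm.le).hasSum_iff.mpr (by rw [Fcc])
  have hH : HasSum (fun n : ℕ => ((R : ℂ) ^ (2 * n + 1) / ((2 * n + 1 : ℕ) : ℂ) ^ 1) *
      ∑ m ∈ Finset.range (n + 1), (1 / S) ^ (2 * m + 1) / ((2 * m + 1 : ℕ) : ℂ) ^ 1)
      (Fcc 1 1 (R : ℂ) (1 / S)) :=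
    (summable_Fcc 1 1 (R : ℂ) (1 / S) hRn hSinorm.le).hasSum_iff.mpr (by rw [Fcc])
  -- combine
  have hcomb := (((((((hA3.mul_left 2).sub hB3).sub hC3).sub (hD.mul_left 4)).add
    (hE.mul_left 2)).add (hF.mul_left 2)).add
    ((((hB2.sub hC2).sub (hG.mul_left 2)).add (hH.mul_left 2)).mul_left
      (Complex.I * (θ : ℂ))))
  have hcomb2 : HasSum (fun n : ℕ =>
      ((2 * R ^ (2 * n + 1) / ((2 * n + 1 : ℕ) : ℝ) * (Haux n θ - Haux n 0) : ℝ) : ℂ))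
      (2 * Fc 3 (R : ℂ) - Fc 3 ((R : ℂ) * S) - Fc 3 ((R : ℂ) / S)
        - 4 * Fcc 1 2 (R : ℂ) 1 + 2 * Fcc 1 2 (R : ℂ) S + 2 * Fcc 1 2 (R : ℂ) (1 / S)
        + Complex.I * (θ : ℂ) *
          (Fc 2 ((R : ℂ) * S) - Fc 2 ((R : ℂ) / S)
            - 2 * Fcc 1 1 (R : ℂ) S + 2 * Fcc 1 1 (R : ℂ) (1 / S))) := by
    have hfun : (fun n : ℕ =>
        ((2 * R ^ (2 * n + 1) / ((2 * n + 1 : ℕ) : ℝ) * (Haux n θ - Haux n 0) : ℝ) : ℂ))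
        = _ := funext fun n => perterm hSexp n
    rw [hfun]
    exact hcomb
  rw [step1 habsw hw0 hRabs hv, Complex.ofReal_tsum]
  exact hcomb2.tsum_eq
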